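/- In the discrete oscillator group L = H₁ʳ(ℤ) ⋊_S ℤδ, if the automorphism S̄ induced on H₁ʳ(ℤ)/Z(H₁ʳ(ℤ)) ≅ ℤ² is one of the matrices S_2 = -I₂, S_3, S_4, S_6 (of order q ∈ {2,3,4,6}) and S(γ) = γ, then S^q = id and the center of L is generated by γ and δ^q. -/

import Mathlib

/-- The discrete Heisenberg group `H₁ʳ(ℤ)`: elements `α^x β^y γ^z` in normal form,
with `[α,β] = γ^r` and `γ` central. -/
@[ext]
structure Heis (r : ℤ) where
  x : ℤ
  y : ℤ
  z : ℤ

namespace Heis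

variable {r : ℤ}

instance : Mul (Heis r) :=
  ⟨fun a b => ⟨a.x + b.x, a.y + b.y, a.z + b.z + r * a.x * b.y⟩⟩

instance : One (Heis r) := ⟨⟨0, 0, 0⟩⟩

instance : Inv (Heis r) := ⟨fun a => ⟨-a.x, -a.y, -a.z + r * a.x * a.y⟩⟩

@[simp] theorem mul_x (a b : Heis r) : (a * b).x = a.x + b.x := rfl
@[simp] theorem mul_y (a b : Heis r) : (a * b).y = a.y + b.y := rfl
@[simp] theorem mul_z (a b : Heis r) : (a * b).z = a.z + b.z + r * a.x * b.y := rfl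
@[simp] theorem one_x : (1 : Heis r).x = 0 := rfl
@[simp] theorem one_y : (1 : Heis r).y = 0 := rfl
@[simp] theorem one_z : (1 : Heis r).z = 0 := rfl
@[simp] theorem inv_x (a : Heis r) : (a⁻¹).x = -a.x := rfl
@[simp] theorem inv_y (a : Heis r) : (a⁻¹).y = -a.y := rfl
@[simp] theorem inv_z (a : Heis r) : (a⁻¹).z = -a.z + r * a.x * a.y := rfl

instance : Group (Heis r) where
  mul_assoc a b c := by ext <;> simp <;> ring
  one_mul a := by ext <;> simp
  mul_one a := by ext <;> simp
  inv_mul_cancel a := by ext <;> simp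

/-- The generator `α` of the discrete Heisenberg group. -/
def α : Heis r := ⟨1, 0, 0⟩
/-- The generator `β` of the discrete Heisenberg group. -/
def β : Heis r := ⟨0, 1, 0⟩
/-- The central generator `γ` of the discrete Heisenberg group. -/
def γ : Heis r := ⟨0, 0, 1⟩

-- auxiliary lemmas
theorem alpha_zpow (n : ℤ) : (α : Heis r) ^ n = ⟨n, 0, 0⟩ := by
  induction n using Int.induction_on with
  | zero => ext <;> simp
  | succ i ih => rw [zpow_add_one, ih]; ext <;> simp [α] <;> omega
  | pred i ih => rw [zpow_sub_one, ih]; ext <;> simp [α] <;> omega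

theorem beta_zpow (n : ℤ) : (β : Heis r) ^ n = ⟨0, n, 0⟩ := by
  induction n using Int.induction_on with
  | zero => ext <;> simp
  | succ i ih => rw [zpow_add_one, ih]; ext <;> simp [β] <;> omega
  | pred i ih => rw [zpow_sub_one, ih]; ext <;> simp [β] <;> omega

theorem gamma_zpow (n : ℤ) : (γ : Heis r) ^ n = ⟨0, 0, n⟩ := by
  induction n using Int.induction_on with
  | zero => ext <;> simp
  | succ i ih => rw [zpow_add_one, ih]; ext <;> simp [γ] <;> omega
  | pred i ih => rw [zpow_sub_one, ih]; ext <;> simp [γ] <;> omega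

theorem gamma_comm (a : Heis r) (n : ℤ) :
    a * (⟨0, 0, n⟩ : Heis r) = (⟨0, 0, n⟩ : Heis r) * a := by
  ext <;> simp <;> omega

theorem mk_eq (x y z : ℤ) :
    (⟨x, y, z⟩ : Heis r) = α ^ x * β ^ y * γ ^ (z - r * x * y) := by
  rw [alpha_zpow, beta_zpow, gamma_zpow]; ext <;> simp <;> ring

theorem hom_apply {M : Type*} [Group M] (f : Heis r →* M) (x y z : ℤ) :
    f ⟨x, y, z⟩ = f α ^ x * f β ^ y * f γ ^ (z - r * x * y) := by
  rw [mk_eq x y z, map_mul, map_mul, map_zpow, map_zpow, map_zpow]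

theorem hom_ext {M : Type*} [Group M] {f g : Heis r →* M}
    (h1 : f α = g α) (h2 : f β = g β) (h3 : f γ = g γ) : f = g := by
  ext a
  obtain ⟨x, y, z⟩ := a
  rw [hom_apply f x y z, hom_apply g x y z, h1, h2, h3]

/-- `U t = t(t+1)/2`. -/
def U (t : ℤ) : ℤ := (t * t + t) / 2

theorem two_U (t : ℤ) : 2 * U t = t * t + t := by
  have h : (2 : ℤ) ∣ t * t + t := by
    obtain ⟨c, hc⟩ := Int.even_mul_succ_self t
    exact ⟨c, by linear_combination hc⟩
  exact Int.mul_ediv_cancel' h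

theorem U_add (a b : ℤ) : U (a + b) = U a + U b + a * b :=
  mul_left_cancel₀ (two_ne_zero) (by linear_combination two_U (a+b) - two_U a - two_U b)

theorem U_neg (a : ℤ) : U (-a) = U a - a :=
  mul_left_cancel₀ (two_ne_zero) (by linear_combination two_U (-a) - two_U a)

theorem U_sub (a b : ℤ) : U (a - b) = U a + U b - a * b - b :=
  mul_left_cancel₀ (two_ne_zero) (by linear_combination two_U (a-b) - two_U a - two_U b)

@[simp] theorem U_zero : U 0 = 0 := rfl
@[simp] theorem U_one : U 1 = 1 := rfl

/-- Explicit formula for the action. -/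
def sig (r k l s11 s12 s21 s22 : ℤ) : Heis r → Heis r := fun h =>
  ⟨s11 * h.x + s12 * h.y, s21 * h.x + s22 * h.y,
   h.z + r * s11 * s21 * U h.x + r * s12 * s22 * U h.y
     + r * s12 * s21 * h.x * h.y + k * h.x + l * h.y⟩

def sigHom (r k l s11 s12 s21 s22 : ℤ) (hdet : s11 * s22 - s12 * s21 = 1) :
    Heis r →* Heis r where
  toFun := sig r k l s11 s12 s21 s22
  map_one' := by simp [sig]; rfl
  map_mul' a b := by
    ext
    · simp [sig]; ring
    · simp [sig]; ring
    · simp [sig, U_add]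
      linear_combination (-(r * a.x * b.y)) * hdet

end Heis


open SemidirectProduct

open SemidirectProduct Heis

theorem fix_zpow {r : ℤ} (e : MulAut (Heis r)) (a : Heis r) (h : e a = a) :
    ∀ m : ℤ, (e ^ m) a = a := by
  have hn : ∀ p : ℕ, (e ^ p) a = a := by
    intro p
    induction p with
    | zero => simp
    | succ p ih => rw [pow_succ, MulAut.mul_apply, h, ih]
  intro m
  cases m with
  | ofNat p => simpa using hn p
  | negSucc p =>
    rw [zpow_negSucc]
    have : ((e ^ (p + 1))⁻¹ : MulAut (Heis r)) = (e ^ (p + 1)).symm := rfl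
    rw [this, MulEquiv.symm_apply_eq, hn (p + 1)]

theorem pow_ofAdd_one (m : ℤ) :
    (Multiplicative.ofAdd (1 : ℤ)) ^ m = Multiplicative.ofAdd m := by
  apply Multiplicative.toAdd.injective
  simp

theorem aux (r k l s11 s12 s21 s22 : ℤ) (q : ℕ) (hq0 : 0 < q)
    (hdet : s11 * s22 - s12 * s21 = 1)
    (φ : Multiplicative ℤ →* MulAut (Heis r))
    (hα : φ (Multiplicative.ofAdd 1) Heis.α = Heis.α ^ s11 * Heis.β ^ s21 * Heis.γ ^ k)
    (hβ : φ (Multiplicative.ofAdd 1) Heis.β = Heis.α ^ s12 * Heis.β ^ s22 * Heis.γ ^ l)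
    (hγ : φ (Multiplicative.ofAdd 1) Heis.γ = Heis.γ)
    (hiter : ∀ h : Heis r, (sig r k l s11 s12 s21 s22)^[q] h = h)
    (hfix : ∀ x y : ℤ, s11 * x + s12 * y = x → s21 * x + s22 * y = y → x = 0 ∧ y = 0)
    (hord : ∀ j : ℕ, 0 < j → j < q → (sig r k l s11 s12 s21 s22)^[j] Heis.α ≠ Heis.α) :
    (φ (Multiplicative.ofAdd 1)) ^ q = 1 ∧
    Subgroup.center (Heis r ⋊[φ] Multiplicative ℤ) =
      Subgroup.closure {SemidirectProduct.inl Heis.γ,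
        (SemidirectProduct.inr (Multiplicative.ofAdd 1)) ^ q} := by
  set S := φ (Multiplicative.ofAdd 1) with hSdef
  set σ := sig r k l s11 s12 s21 s22 with hσ
  -- S agrees with σ
  have hSeq : ∀ h : Heis r, S h = σ h := by
    have h1 : S.toMonoidHom = sigHom r k l s11 s12 s21 s22 hdet := by
      apply Heis.hom_ext
      · show S Heis.α = _
        rw [hα]
        show _ = σ Heis.α
        rw [alpha_zpow, beta_zpow, gamma_zpow]
        ext <;> simp [hσ, sig, Heis.α] <;> ring
      · show S Heis.β = _
        rw [hβ]
        show _ = σ Heis.β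
        rw [alpha_zpow, beta_zpow, gamma_zpow]
        ext <;> simp [hσ, sig, Heis.β] <;> ring
      · show S Heis.γ = _
        rw [hγ]
        show _ = σ Heis.γ
        ext <;> simp [hσ, sig, Heis.γ]
    intro h
    exact congrFun (congrArg (fun f => f.toFun) h1) h
  have hpow : ∀ (j : ℕ) (h : Heis r), (S ^ j) h = σ^[j] h := by
    intro j
    induction j with
    | zero => intro h; simp
    | succ j ih =>
      intro h
      rw [pow_succ, MulAut.mul_apply, hSeq, Function.iterate_succ_apply, ih]
  have part1 : S ^ q = 1 := by
    refine MulEquiv.ext fun h => ?_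
    rw [hpow q h, hiter h]
    rfl
  refine ⟨part1, ?_⟩
  apply le_antisymm
  · -- center ≤ closure
    intro u hu
    rw [Subgroup.mem_center_iff] at hu
    obtain ⟨h, n⟩ := u
    -- from commuting with inr (ofAdd 1) : S h = h
    have e1 : S h = h := by
      have := congrArg SemidirectProduct.left (hu (inr (Multiplicative.ofAdd 1)))
      simpa using this
    obtain ⟨x, y, z⟩ := h
    have e1' : σ ⟨x, y, z⟩ = ⟨x, y, z⟩ := by rw [← hSeq]; exact e1
    have e2 := congrArg Heis.x e1'
    have e3 := congrArg Heis.y e1'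
    simp [hσ, sig] at e2 e3
    obtain ⟨rfl, rfl⟩ := hfix x y e2 e3
    -- from commuting with inl α : φ n α = α
    have e4 : φ n Heis.α = Heis.α := by
      have := congrArg SemidirectProduct.left (hu (inl Heis.α))
      simp at this
      -- this : Heis.α * ⟨0,0,z⟩ = ⟨0,0,z⟩ * φ n Heis.α
      rw [← gamma_comm (φ n Heis.α) z] at this
      exact mul_right_cancel this.symm
    set m := Multiplicative.toAdd n with hm
    have hn' : n = Multiplicative.ofAdd m := rfl
    have e5 : (S ^ m) Heis.α = Heis.α := by
      rw [hSdef, ← map_zpow, pow_ofAdd_one, ← hn']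
      exact e4
    have hjq : m % (q : ℤ) < (q : ℤ) := Int.emod_lt_of_pos m (by exact_mod_cast hq0)
    have hj0 : 0 ≤ m % (q : ℤ) := Int.emod_nonneg m (by positivity)
    have e6 : (S ^ (m % (q : ℤ))) Heis.α = Heis.α := by
      have : S ^ m = S ^ (m % (q : ℤ)) := by
        conv_lhs => rw [← Int.mul_ediv_add_emod m (q : ℤ)]
        rw [zpow_add, zpow_mul, zpow_natCast, part1, one_zpow, one_mul]
      rw [← this]; exact e5
    have e7 : m % (q : ℤ) = 0 := by
      by_contra hne
      set j := (m % (q : ℤ)).toNat with hj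
      have hjeq : (j : ℤ) = m % (q : ℤ) := Int.toNat_of_nonneg hj0
      have : (S ^ (j : ℕ)) Heis.α = Heis.α := by
        rw [← zpow_natCast, hjeq]; exact e6
      rw [hpow] at this
      exact hord j (by omega) (by omega) this
    -- so q ∣ m
    obtain ⟨d, hd⟩ : (q : ℤ) ∣ m := Int.dvd_of_emod_eq_zero e7
    have hmul : ((Multiplicative.ofAdd (1 : ℤ)) ^ q) ^ d =
        Multiplicative.ofAdd ((q : ℤ) * d) := by
      rw [← zpow_natCast (Multiplicative.ofAdd (1 : ℤ)) q, ← zpow_mul, pow_ofAdd_one]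
    have hu_eq : (⟨⟨0, 0, z⟩, n⟩ : Heis r ⋊[φ] Multiplicative ℤ) =
        (inl Heis.γ) ^ z * ((inr (Multiplicative.ofAdd 1) :
          Heis r ⋊[φ] Multiplicative ℤ) ^ q) ^ d := by
      have hr1 : (inl Heis.γ : Heis r ⋊[φ] Multiplicative ℤ) ^ z = inl (Heis.γ ^ z) :=
        (map_zpow inl Heis.γ z).symm
      have hr2 : ((inr (Multiplicative.ofAdd 1) : Heis r ⋊[φ] Multiplicative ℤ) ^ q) ^ d =
          inr (Multiplicative.ofAdd ((q : ℤ) * d)) := by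
        rw [← map_pow, ← map_zpow, hmul]
      rw [hr1, hr2, gamma_zpow]
      refine SemidirectProduct.ext ?_ ?_
      · simp only [mul_left, left_inl, left_inr, right_inl, map_one,
          MulAut.one_apply, mul_one]
      · simp only [mul_right, right_inl, right_inr, one_mul]
        rw [hn', hd]
    rw [hu_eq]
    have m1 : SemidirectProduct.inl Heis.γ ∈
        Subgroup.closure {SemidirectProduct.inl Heis.γ,
          (SemidirectProduct.inr (Multiplicative.ofAdd 1) :
            Heis r ⋊[φ] Multiplicative ℤ) ^ q} :=
      Subgroup.subset_closure (Set.mem_insert _ _)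
    have m2 : (SemidirectProduct.inr (Multiplicative.ofAdd 1) :
          Heis r ⋊[φ] Multiplicative ℤ) ^ q ∈
        Subgroup.closure {SemidirectProduct.inl Heis.γ,
          (SemidirectProduct.inr (Multiplicative.ofAdd 1) :
            Heis r ⋊[φ] Multiplicative ℤ) ^ q} :=
      Subgroup.subset_closure (Set.mem_insert_of_mem _ rfl)
    exact mul_mem (zpow_mem m1 z) (zpow_mem m2 d)
  · -- closure ≤ center
    rw [Subgroup.closure_le]
    rintro g hg
    simp only [Set.mem_insert_iff, Set.mem_singleton_iff] at hg
    rcases hg with rfl | rfl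
    · rw [SetLike.mem_coe, Subgroup.mem_center_iff]
      intro g
      have hcg : φ g.right (⟨0, 0, 1⟩ : Heis r) = (⟨0, 0, 1⟩ : Heis r) := by
        show φ g.right Heis.γ = Heis.γ
        rw [show g.right = Multiplicative.ofAdd (Multiplicative.toAdd g.right) from rfl,
          ← pow_ofAdd_one, map_zpow]
        exact fix_zpow S Heis.γ hγ _
      ext <;>
        simp [hcg, Heis.γ] <;> omega
    · rw [SetLike.mem_coe, Subgroup.mem_center_iff]
      intro g
      have h2 : φ (Multiplicative.ofAdd 1 ^ q) g.left = g.left := by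
        rw [map_pow]
        rw [show (φ (Multiplicative.ofAdd 1)) ^ q = 1 from part1]
        rfl
      have key : ((inr (Multiplicative.ofAdd 1) : Heis r ⋊[φ] Multiplicative ℤ) ^ q) =
          inr (Multiplicative.ofAdd 1 ^ q) := (map_pow _ _ _).symm
      rw [key]
      refine SemidirectProduct.ext ?_ ?_
      · simp only [mul_left, left_inr, right_inr, map_one, mul_one, one_mul, h2]
      · simp only [mul_right, right_inr]
        exact mul_comm _ _

/-- In a discrete oscillator group `L = H₁ʳ(ℤ) ⋊_S ℤδ` whose induced action on
`H₁ʳ(ℤ)/Z(H₁ʳ(ℤ)) ≅ ℤ²` is one of the matrices `S₂ = -I₂`, `S₃`, `S₄`, `S₆`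
(of order `q ∈ {2,3,4,6}`), and with `S(γ) = γ`, one has `S^q = id` and the
centre of `L` is generated by `γ` and `δ^q`. -/
theorem center_of_discrete_oscillator_group_finite_order
    (r k l : ℤ) (hr : 0 < r)
    (s11 s12 s21 s22 : ℤ) (q : ℕ)
    (hS : ((s11, s12, s21, s22) = (-1, 0, 0, -1) ∧ q = 2) ∨
          ((s11, s12, s21, s22) = (0, -1, 1, -1) ∧ q = 3) ∨
          ((s11, s12, s21, s22) = (0, -1, 1, 0) ∧ q = 4) ∨
          ((s11, s12, s21, s22) = (1, -1, 1, 0) ∧ q = 6))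
    (φ : Multiplicative ℤ →* MulAut (Heis r))
    (hα : φ (Multiplicative.ofAdd 1) Heis.α = Heis.α ^ s11 * Heis.β ^ s21 * Heis.γ ^ k)
    (hβ : φ (Multiplicative.ofAdd 1) Heis.β = Heis.α ^ s12 * Heis.β ^ s22 * Heis.γ ^ l)
    (hγ : φ (Multiplicative.ofAdd 1) Heis.γ = Heis.γ) :
    (φ (Multiplicative.ofAdd 1)) ^ q = 1 ∧
    Subgroup.center (Heis r ⋊[φ] Multiplicative ℤ) =
      Subgroup.closure {SemidirectProduct.inl Heis.γ,
        (SemidirectProduct.inr (Multiplicative.ofAdd 1)) ^ q} := by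
  rcases hS with ⟨hs, rfl⟩ | ⟨hs, rfl⟩ | ⟨hs, rfl⟩ | ⟨hs, rfl⟩ <;>
    (simp only [Prod.mk.injEq] at hs; obtain ⟨rfl, rfl, rfl, rfl⟩ := hs)
  · -- q = 2
    refine aux r k l (-1) 0 0 (-1) 2 (by norm_num) (by norm_num) φ hα hβ hγ ?_ ?_ ?_
    · rintro ⟨x, y, z⟩
      show sig r k l (-1) 0 0 (-1) (sig r k l (-1) 0 0 (-1) ⟨x, y, z⟩) = _
      ext <;> simp [sig, U_add, U_sub, U_neg] <;> ring
    · intro x y h1 h2; omega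
    · intro j hj1 hj2
      interval_cases j
      · intro hc
        have h' : sig r k l (-1) 0 0 (-1) Heis.α = Heis.α := hc
        simp [sig, Heis.α, Heis.ext_iff] at h'
  · -- q = 3
    refine aux r k l 0 (-1) 1 (-1) 3 (by norm_num) (by norm_num) φ hα hβ hγ ?_ ?_ ?_
    · rintro ⟨x, y, z⟩
      show sig r k l 0 (-1) 1 (-1)
        (sig r k l 0 (-1) 1 (-1) (sig r k l 0 (-1) 1 (-1) ⟨x, y, z⟩)) = _
      ext <;> simp [sig, U_add, U_sub, U_neg] <;>
        linear_combination (r : ℤ) * two_U x + (r : ℤ) * two_U y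
    · intro x y h1 h2; omega
    · intro j hj1 hj2
      interval_cases j
      · intro hc
        have h' : sig r k l 0 (-1) 1 (-1) Heis.α = Heis.α := hc
        simp [sig, Heis.α, Heis.ext_iff] at h'
      · intro hc
        have h' : sig r k l 0 (-1) 1 (-1) (sig r k l 0 (-1) 1 (-1) Heis.α) = Heis.α := hc
        simp [sig, Heis.α, Heis.ext_iff] at h'
  · -- q = 4
    refine aux r k l 0 (-1) 1 0 4 (by norm_num) (by norm_num) φ hα hβ hγ ?_ ?_ ?_
    · rintro ⟨x, y, z⟩
      show sig r k l 0 (-1) 1 0 (sig r k l 0 (-1) 1 0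
        (sig r k l 0 (-1) 1 0 (sig r k l 0 (-1) 1 0 ⟨x, y, z⟩))) = _
      ext <;> simp [sig, U_add, U_sub, U_neg] <;> ring
    · intro x y h1 h2; omega
    · intro j hj1 hj2
      interval_cases j
      · intro hc
        have h' : sig r k l 0 (-1) 1 0 Heis.α = Heis.α := hc
        simp [sig, Heis.α, Heis.ext_iff] at h'
      · intro hc
        have h' : sig r k l 0 (-1) 1 0 (sig r k l 0 (-1) 1 0 Heis.α) = Heis.α := hc
        simp [sig, Heis.α, Heis.ext_iff] at h'
      · intro hc
        have h' : sig r k l 0 (-1) 1 0 (sig r k l 0 (-1) 1 0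
          (sig r k l 0 (-1) 1 0 Heis.α)) = Heis.α := hc
        simp [sig, Heis.α, Heis.ext_iff] at h'
  · -- q = 6
    refine aux r k l 1 (-1) 1 0 6 (by norm_num) (by norm_num) φ hα hβ hγ ?_ ?_ ?_
    · rintro ⟨x, y, z⟩
      show sig r k l 1 (-1) 1 0 (sig r k l 1 (-1) 1 0 (sig r k l 1 (-1) 1 0
        (sig r k l 1 (-1) 1 0 (sig r k l 1 (-1) 1 0
          (sig r k l 1 (-1) 1 0 ⟨x, y, z⟩))))) = _
      ext <;> simp [sig, U_add, U_sub, U_neg] <;>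
        linear_combination (2 * r : ℤ) * two_U x + (2 * r : ℤ) * two_U y
    · intro x y h1 h2; omega
    · intro j hj1 hj2
      interval_cases j
      · intro hc
        have h' : sig r k l 1 (-1) 1 0 Heis.α = Heis.α := hc
        simp [sig, Heis.α, Heis.ext_iff] at h'
      · intro hc
        have h' : sig r k l 1 (-1) 1 0 (sig r k l 1 (-1) 1 0 Heis.α) = Heis.α := hc
        simp [sig, Heis.α, Heis.ext_iff] at h'
      · intro hc
        have h' : sig r k l 1 (-1) 1 0 (sig r k l 1 (-1) 1 0
          (sig r k l 1 (-1) 1 0 Heis.α)) = Heis.α := hc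
        simp [sig, Heis.α, Heis.ext_iff] at h'
      · intro hc
        have h' : sig r k l 1 (-1) 1 0 (sig r k l 1 (-1) 1 0 (sig r k l 1 (-1) 1 0
          (sig r k l 1 (-1) 1 0 Heis.α))) = Heis.α := hc
        simp [sig, Heis.α, Heis.ext_iff] at h'
      · intro hc
        have h' : sig r k l 1 (-1) 1 0 (sig r k l 1 (-1) 1 0 (sig r k l 1 (-1) 1 0
          (sig r k l 1 (-1) 1 0 (sig r k l 1 (-1) 1 0 Heis.α)))) = Heis.α := hc
        simp [sig, Heis.α, Heis.ext_iff] at h'
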